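/- For every natural number t, the odd-index Fibonacci number f(4t-1) equals the sum over all odd s with 1 ≤ s ≤ 2t+1 of (2^s · u t s + 2^(s-1) · u t (-s)). -/

import Mathlib

/-- One step of the recursion defining `u`: given `u t`, first the values at odd
positions are computed from `u t`, then the values at even positions are computed from
`u t` and the new odd values. -/
def ustep (v : ℤ → ℤ) : ℤ → ℤ := fun s =>
  let w : ℤ → ℤ := fun s' =>
    if s' < 0 then 2 * v (s' - 1) - v s' + v (s' + 1)
    else v (s' - 1) - v s' + 2 * v (s' + 1)
  if s % 2 = 0 then
    if s < 0 then 2 * w (s - 1) - v s + w (s + 1)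
    else w (s - 1) - v s + 2 * w (s + 1)
  else w s

/-- The doubly infinite sequences `u t : ℤ → ℤ`: `u 0` is the indicator function of
`{0, -1}`, and `u (t+1)` is obtained from `u t` by the two-step reflection rule. -/
def u : ℕ → ℤ → ℤ
  | 0 => fun s => if s = 0 ∨ s = -1 then 1 else 0
  | t + 1 => ustep (u t)

lemma ustep_odd_pos (v : ℤ → ℤ) (s : ℤ) (h1 : s % 2 = 1) (h2 : 0 < s) :
    ustep v s = v (s - 1) - v s + 2 * v (s + 1) := by
  simp only [ustep]
  rw [if_neg (by omega), if_neg (by omega)]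

lemma ustep_odd_neg (v : ℤ → ℤ) (s : ℤ) (h1 : s % 2 = 1) (h2 : s < 0) :
    ustep v s = 2 * v (s - 1) - v s + v (s + 1) := by
  simp only [ustep]
  rw [if_neg (by omega), if_pos h2]

lemma ustep_even_pos (v : ℤ → ℤ) (s : ℤ) (h1 : s % 2 = 0) (h2 : 2 ≤ s) :
    ustep v s = v (s - 2) - v (s - 1) + 3 * v s - 2 * v (s + 1) + 4 * v (s + 2) := by
  simp only [ustep]
  rw [if_pos h1, if_neg (by omega), if_neg (by omega), if_neg (by omega)]
  rw [show s - 1 - 1 = s - 2 by ring, show s - 1 + 1 = s by ring,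
    show s + 1 - 1 = s by ring, show s + 1 + 1 = s + 2 by ring]
  ring

lemma ustep_even_neg (v : ℤ → ℤ) (s : ℤ) (h1 : s % 2 = 0) (h2 : s ≤ -2) :
    ustep v s = 4 * v (s - 2) - 2 * v (s - 1) + 3 * v s - v (s + 1) + v (s + 2) := by
  simp only [ustep]
  rw [if_pos h1, if_pos (by omega), if_pos (by omega), if_pos (by omega)]
  rw [show s - 1 - 1 = s - 2 by ring, show s - 1 + 1 = s by ring,
    show s + 1 - 1 = s by ring, show s + 1 + 1 = s + 2 by ring]
  ring

lemma ustep_zero (v : ℤ → ℤ) :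
    ustep v 0 = 2 * v (-2) - v (-1) + 2 * v 0 - 2 * v 1 + 4 * v 2 := by
  simp only [ustep]
  norm_num
  ring

lemma u_pos_zero : ∀ (t : ℕ) (s : ℤ), 2 * (t : ℤ) < s → u t s = 0 := by
  intro t
  induction t with
  | zero =>
    intro s hs
    simp only [u]
    rw [if_neg (by omega)]
  | succ t ih =>
    intro s hs
    push_cast at hs
    show ustep (u t) s = 0
    rcases Int.emod_two_eq s with h | h
    · rw [ustep_even_pos _ _ h (by omega),
        ih (s - 2) (by omega), ih (s - 1) (by omega), ih s (by omega),
        ih (s + 1) (by omega), ih (s + 2) (by omega)]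
      ring
    · rw [ustep_odd_pos _ _ h (by omega),
        ih (s - 1) (by omega), ih s (by omega), ih (s + 1) (by omega)]
      ring

lemma u_neg_zero : ∀ (t : ℕ) (s : ℤ), s < -(2 * (t : ℤ) + 1) → u t s = 0 := by
  intro t
  induction t with
  | zero =>
    intro s hs
    simp only [u]
    rw [if_neg (by omega)]
  | succ t ih =>
    intro s hs
    push_cast at hs
    show ustep (u t) s = 0
    rcases Int.emod_two_eq s with h | h
    · rw [ustep_even_neg _ _ h (by omega),
        ih (s - 2) (by omega), ih (s - 1) (by omega), ih s (by omega),
        ih (s + 1) (by omega), ih (s + 2) (by omega)]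
      ring
    · rw [ustep_odd_neg _ _ h (by omega),
        ih (s - 1) (by omega), ih s (by omega), ih (s + 1) (by omega)]
      ring

noncomputable section

def A (t k : ℕ) : ℤ := 2 ^ (2 * k + 1) * u t (2 * (k : ℤ) + 1) + 2 ^ (2 * k) * u t (-(2 * (k : ℤ) + 1))

def B (t k : ℕ) : ℤ := 2 ^ (2 * k + 2) * u t (2 * (k : ℤ) + 2) + 2 ^ (2 * k + 1) * u t (-(2 * (k : ℤ) + 2))

def X (t : ℕ) : ℤ := ∑ k ∈ Finset.range (t + 1), A t k

def Y (t : ℕ) : ℤ := u t 0 + ∑ k ∈ Finset.range (t + 1), B t k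

lemma A_top (t : ℕ) : A t (t + 1) = 0 := by
  unfold A
  rw [u_pos_zero t _ (by push_cast; omega), u_neg_zero t _ (by push_cast; omega)]
  ring

lemma B_top (t : ℕ) : B t (t + 1) = 0 := by
  unfold B
  rw [u_pos_zero t _ (by push_cast; omega), u_neg_zero t _ (by push_cast; omega)]
  ring

lemma X_pad (t : ℕ) : ∑ k ∈ Finset.range (t + 2), A t k = X t := by
  rw [show t + 2 = (t + 1) + 1 from rfl, Finset.sum_range_succ, A_top, add_zero]; rfl

lemma Y_pad (t : ℕ) : ∑ k ∈ Finset.range (t + 2), B t k = Y t - u t 0 := by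
  rw [show t + 2 = (t + 1) + 1 from rfl, Finset.sum_range_succ, B_top, add_zero]
  unfold Y; ring

lemma X_succ (t : ℕ) : X (t + 1) = 3 * Y t - X t := by
  set v := u t with hv
  have key : ∀ k : ℕ, A (t + 1) k =
      (3 * B t k - A t k) +
      ((2 ^ (2 * k + 1) * v (2 * (k : ℤ)) + 2 ^ (2 * k) * v (-(2 * (k : ℤ)))) -
       (2 ^ (2 * (k + 1) + 1) * v (2 * ((k + 1 : ℕ) : ℤ)) + 2 ^ (2 * (k + 1)) * v (-(2 * ((k + 1 : ℕ) : ℤ))))) := by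
    intro k
    unfold A B
    show 2 ^ (2 * k + 1) * ustep v (2 * (k : ℤ) + 1) + 2 ^ (2 * k) * ustep v (-(2 * (k : ℤ) + 1)) = _
    rw [ustep_odd_pos v _ (by omega) (by omega), ustep_odd_neg v _ (by omega) (by omega)]
    rw [show 2 * (k : ℤ) + 1 - 1 = 2 * k by ring, show 2 * (k : ℤ) + 1 + 1 = 2 * k + 2 by ring,
      show -(2 * (k : ℤ) + 1) - 1 = -(2 * (k : ℤ) + 2) by ring,
      show -(2 * (k : ℤ) + 1) + 1 = -(2 * (k : ℤ)) by ring,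
      show 2 * (((k + 1 : ℕ) : ℤ)) = 2 * (k : ℤ) + 2 by push_cast; ring]
    ring
  have hX1 : X (t + 1) = ∑ k ∈ Finset.range (t + 2), A (t + 1) k := rfl
  rw [hX1, Finset.sum_congr rfl (fun k _ => key k), Finset.sum_add_distrib,
    Finset.sum_range_sub' (fun k => 2 ^ (2 * k + 1) * v (2 * (k : ℤ)) + 2 ^ (2 * k) * v (-(2 * (k : ℤ)))) (t + 2)]
  have h1 : ∑ k ∈ Finset.range (t + 2), (3 * B t k - A t k) = 3 * (Y t - u t 0) - X t := by
    rw [Finset.sum_sub_distrib, ← Finset.mul_sum, X_pad, Y_pad]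
  rw [h1]
  have h2 : v (2 * ((t + 2 : ℕ) : ℤ)) = 0 := u_pos_zero t _ (by push_cast; omega)
  have h3 : v (-(2 * ((t + 2 : ℕ) : ℤ))) = 0 := u_neg_zero t _ (by push_cast; omega)
  rw [h2, h3]
  norm_num
  simp only [← hv]
  ring

lemma Y_succ (t : ℕ) : Y (t + 1) = 8 * Y t - 3 * X t := by
  set v := u t with hv
  set G : ℕ → ℤ := fun k => 2 ^ (2 * k) *
      (4 * v (2 * (k : ℤ)) + 2 * v (-(2 * (k : ℤ))) + 2 * v (2 * (k : ℤ) + 1) +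
       v (-(2 * (k : ℤ) + 1)) - 4 * v (2 * (k : ℤ) + 2) - 2 * v (-(2 * (k : ℤ) + 2))) with hG
  have key : ∀ k : ℕ, B (t + 1) k = (8 * B t k - 3 * A t k) + (G k - G (k + 1)) := by
    intro k
    unfold A B
    show 2 ^ (2 * k + 2) * ustep v (2 * (k : ℤ) + 2) + 2 ^ (2 * k + 1) * ustep v (-(2 * (k : ℤ) + 2)) = _
    rw [ustep_even_pos v _ (by omega) (by omega), ustep_even_neg v _ (by omega) (by omega)]
    rw [show 2 * (k : ℤ) + 2 - 2 = 2 * k by ring, show 2 * (k : ℤ) + 2 - 1 = 2 * k + 1 by ring,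
      show 2 * (k : ℤ) + 2 + 1 = 2 * k + 3 by ring, show 2 * (k : ℤ) + 2 + 2 = 2 * k + 4 by ring,
      show -(2 * (k : ℤ) + 2) - 2 = -(2 * (k : ℤ) + 4) by ring,
      show -(2 * (k : ℤ) + 2) - 1 = -(2 * (k : ℤ) + 3) by ring,
      show -(2 * (k : ℤ) + 2) + 1 = -(2 * (k : ℤ) + 1) by ring,
      show -(2 * (k : ℤ) + 2) + 2 = -(2 * (k : ℤ)) by ring]
    rw [hG]
    push_cast
    rw [show -(2 * ((k : ℤ) + 1)) = -(2 * (k : ℤ) + 2) by ring,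
      show -(2 * ((k : ℤ) + 1) + 1) = -(2 * (k : ℤ) + 3) by ring,
      show -(2 * ((k : ℤ) + 1) + 2) = -(2 * (k : ℤ) + 4) by ring,
      show 2 * ((k : ℤ) + 1) + 1 = 2 * k + 3 by ring,
      show 2 * ((k : ℤ) + 1) + 2 = 2 * k + 4 by ring,
      show 2 * ((k : ℤ) + 1) = 2 * k + 2 by ring]
    simp only [← hv]
    ring
  have hY1 : Y (t + 1) = u (t + 1) 0 + ∑ k ∈ Finset.range (t + 2), B (t + 1) k := rfl
  rw [hY1, Finset.sum_congr rfl (fun k _ => key k), Finset.sum_add_distrib,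
    Finset.sum_range_sub' G (t + 2)]
  have h1 : ∑ k ∈ Finset.range (t + 2), (8 * B t k - 3 * A t k) = 8 * (Y t - u t 0) - 3 * X t := by
    rw [Finset.sum_sub_distrib, ← Finset.mul_sum, ← Finset.mul_sum, X_pad, Y_pad]
  rw [h1]
  have hGtop : G (t + 2) = 0 := by
    rw [hG]
    simp only [hv]
    rw [u_pos_zero t (2 * ((t + 2 : ℕ) : ℤ)) (by push_cast; omega),
      u_pos_zero t (2 * ((t + 2 : ℕ) : ℤ) + 1) (by push_cast; omega),
      u_pos_zero t (2 * ((t + 2 : ℕ) : ℤ) + 2) (by push_cast; omega),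
      u_neg_zero t (-(2 * ((t + 2 : ℕ) : ℤ))) (by push_cast; omega),
      u_neg_zero t (-(2 * ((t + 2 : ℕ) : ℤ) + 1)) (by push_cast; omega),
      u_neg_zero t (-(2 * ((t + 2 : ℕ) : ℤ) + 2)) (by push_cast; omega)]
    ring
  rw [hGtop]
  have hu0 : u (t + 1) 0 = 2 * v (-2) - v (-1) + 2 * v 0 - 2 * v 1 + 4 * v 2 := ustep_zero v
  rw [hu0, hG]
  norm_num
  simp only [← hv]
  ring

/-- The partition formula for the odd-index Fibonacci number `f (4t-1)`:
`f (4t-1) = Σ_{s odd, 1 ≤ s ≤ 2t+1} (2^s · u t s + 2^(s-1) · u t (-s))`,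
where `f` is the extended Fibonacci sequence. -/
theorem fib_partition_4t_sub_one (f : ℤ → ℤ) (h0 : f 0 = 0) (h1 : f 1 = 1)
    (hrec : ∀ n : ℤ, f (n + 1) = f n + f (n - 1)) (t : ℕ) :
    f (4 * (t : ℤ) - 1) =
      ∑ s ∈ (Finset.Icc 1 (2 * t + 1)).filter (fun s => Odd s),
        (2 ^ s * u t (s : ℤ) + 2 ^ (s - 1) * u t (-(s : ℤ))) := by
  have step3 : ∀ m : ℤ, f (m + 4) = 3 * f (m + 2) - f m := by
    intro m
    have e1 := hrec (m + 3); rw [show m + 3 + 1 = m + 4 by ring, show m + 3 - 1 = m + 2 by ring] at e1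
    have e2 := hrec (m + 2); rw [show m + 2 + 1 = m + 3 by ring, show m + 2 - 1 = m + 1 by ring] at e2
    have e3 := hrec (m + 1); rw [show m + 1 + 1 = m + 2 by ring, show m + 1 - 1 = m by ring] at e3
    linarith
  have key : ∀ n : ℕ, X n = f (4 * (n : ℤ) - 1) ∧ Y n = f (4 * (n : ℤ) + 1) := by
    intro n
    induction n with
    | zero =>
      have hm1 : f (-1) = 1 := by
        have := hrec 0
        norm_num at this
        omega
      constructor
      · show X 0 = f (4 * ((0 : ℕ) : ℤ) - 1)
        unfold X A
        norm_num [u, hm1]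
      · show Y 0 = f (4 * ((0 : ℕ) : ℤ) + 1)
        unfold Y B
        norm_num [u, h1]
    | succ n ih =>
      obtain ⟨ihX, ihY⟩ := ih
      have hX : X (n + 1) = f (4 * ((n + 1 : ℕ) : ℤ) - 1) := by
        rw [X_succ, ihX, ihY]
        have := step3 (4 * (n : ℤ) - 1)
        rw [show 4 * (n : ℤ) - 1 + 4 = 4 * ((n + 1 : ℕ) : ℤ) - 1 by push_cast; ring,
          show 4 * (n : ℤ) - 1 + 2 = 4 * n + 1 by ring] at this
        linarith
      have hY : Y (n + 1) = f (4 * ((n + 1 : ℕ) : ℤ) + 1) := by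
        rw [Y_succ, ihX, ihY]
        have e1 := step3 (4 * (n : ℤ) + 1)
        rw [show 4 * (n : ℤ) + 1 + 4 = 4 * ((n + 1 : ℕ) : ℤ) + 1 by push_cast; ring,
          show 4 * (n : ℤ) + 1 + 2 = 4 * n + 3 by ring] at e1
        have e2 := step3 (4 * (n : ℤ) - 1)
        rw [show 4 * (n : ℤ) - 1 + 4 = 4 * n + 3 by ring,
          show 4 * (n : ℤ) - 1 + 2 = 4 * n + 1 by ring] at e2
        linarith
      exact ⟨hX, hY⟩
  rw [← (key t).1]
  have himg : (Finset.Icc 1 (2 * t + 1)).filter (fun s => Odd s) =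
      (Finset.range (t + 1)).image (fun k => 2 * k + 1) := by
    ext s
    simp only [Finset.mem_filter, Finset.mem_Icc, Finset.mem_image, Finset.mem_range,
      Nat.odd_iff]
    constructor
    · rintro ⟨⟨hs1, hs2⟩, hs3⟩
      exact ⟨s / 2, by omega, by omega⟩
    · rintro ⟨k, hk, rfl⟩
      omega
  rw [himg, Finset.sum_image (by intro a _ b _ hab; simp only at hab; omega)]
  show X t = _
  unfold X A
  refine Finset.sum_congr rfl fun k _ => ?_
  rw [show 2 * k + 1 - 1 = 2 * k by omega]
  push_cast
  ring
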